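/- Let g : [0,1] → ℝ be continuous, and for ρ ∈ [0,1) define F(ρ) = ∫_ρ^1 g(t)/sqrt(t² - ρ²) dt. Then for every t ∈ [0,1), ∫_t^1 ρ F(ρ)/sqrt(ρ² - t²) dρ = (π/2) ∫_t^1 g(s) ds. -/

import Mathlib

open Set MeasureTheory Real

namespace AbelAux

noncomputable def kern (t s ρ : ℝ) : ℝ :=
  ρ / (Real.sqrt (ρ ^ 2 - t ^ 2) * Real.sqrt (s ^ 2 - ρ ^ 2))

noncomputable def phi (t s ρ : ℝ) : ℝ :=
  Real.arcsin ((2 * ρ ^ 2 - s ^ 2 - t ^ 2) / (s ^ 2 - t ^ 2)) / 2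

lemma phi_continuous (t s : ℝ) : Continuous (phi t s) := by
  exact (Real.continuous_arcsin.comp
    ((((continuous_const.mul (continuous_pow 2)).sub continuous_const).sub
      continuous_const).div_const _)).div_const 2

lemma kern_nonneg {t s ρ : ℝ} (ht : 0 ≤ t) (hρ : ρ ∈ Ioo t s) : 0 ≤ kern t s ρ :=
  div_nonneg (ht.trans hρ.1.le) (mul_nonneg (Real.sqrt_nonneg _) (Real.sqrt_nonneg _))

lemma phi_hasDerivAt {t s ρ : ℝ} (ht : 0 ≤ t) (hρ : ρ ∈ Ioo t s) :
    HasDerivAt (phi t s) (kern t s ρ) ρ := by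
  obtain ⟨h1, h2⟩ := hρ
  have hρ0 : 0 ≤ ρ := ht.trans h1.le
  have ha : 0 < ρ ^ 2 - t ^ 2 := by nlinarith
  have hb : 0 < s ^ 2 - ρ ^ 2 := by nlinarith
  have hc : 0 < s ^ 2 - t ^ 2 := by nlinarith
  set x := (2 * ρ ^ 2 - s ^ 2 - t ^ 2) / (s ^ 2 - t ^ 2) with hx
  have hx1 : x < 1 := by rw [hx, div_lt_one hc]; nlinarith
  have hxm1 : -1 < x := by rw [hx, lt_div_iff₀ hc]; nlinarith
  have hu : HasDerivAt (fun ρ : ℝ => (2 * ρ ^ 2 - s ^ 2 - t ^ 2) / (s ^ 2 - t ^ 2))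
      (4 * ρ / (s ^ 2 - t ^ 2)) ρ := by
    have h : HasDerivAt (fun ρ : ℝ => 2 * ρ ^ 2 - s ^ 2 - t ^ 2) (4 * ρ) ρ := by
      have := (((hasDerivAt_pow 2 ρ).const_mul 2).sub_const (s ^ 2)).sub_const (t ^ 2)
      refine this.congr_deriv ?_
      rw [show (2:ℕ) - 1 = 1 from rfl]; push_cast; ring
    exact h.div_const _
  have harc : HasDerivAt Real.arcsin (1 / Real.sqrt (1 - x ^ 2)) x :=
    Real.hasDerivAt_arcsin hxm1.ne' hx1.ne
  have hcomp := (harc.comp ρ hu).div_const 2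
  have hsqrt : Real.sqrt (1 - x ^ 2)
      = 2 * Real.sqrt (ρ ^ 2 - t ^ 2) * Real.sqrt (s ^ 2 - ρ ^ 2) / (s ^ 2 - t ^ 2) := by
    have hsq : 1 - x ^ 2
        = (2 * Real.sqrt (ρ ^ 2 - t ^ 2) * Real.sqrt (s ^ 2 - ρ ^ 2) / (s ^ 2 - t ^ 2)) ^ 2 := by
      have hA : (2 * Real.sqrt (ρ ^ 2 - t ^ 2) * Real.sqrt (s ^ 2 - ρ ^ 2) / (s ^ 2 - t ^ 2)) ^ 2
          = 4 * (ρ ^ 2 - t ^ 2) * (s ^ 2 - ρ ^ 2) / (s ^ 2 - t ^ 2) ^ 2 := by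
        rw [div_pow, mul_pow, mul_pow, Real.sq_sqrt ha.le, Real.sq_sqrt hb.le]; norm_num
      rw [hA, hx, div_pow]
      field_simp
      ring
    rw [hsq, Real.sqrt_sq (div_nonneg (by positivity) hc.le)]
  have hfinal : 1 / Real.sqrt (1 - x ^ 2) * (4 * ρ / (s ^ 2 - t ^ 2)) / 2 = kern t s ρ := by
    rw [hsqrt, kern]
    have h1 : Real.sqrt (ρ ^ 2 - t ^ 2) ≠ 0 := (Real.sqrt_pos.mpr ha).ne'
    have h2 : Real.sqrt (s ^ 2 - ρ ^ 2) ≠ 0 := (Real.sqrt_pos.mpr hb).ne'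
    field_simp
    ring
  have : phi t s = fun ρ => Real.arcsin ((2 * ρ ^ 2 - s ^ 2 - t ^ 2) / (s ^ 2 - t ^ 2)) / 2 := rfl
  rw [this, ← hfinal]
  exact hcomp

lemma kern_integrableOn {t s : ℝ} (ht : 0 ≤ t) (hts : t < s) :
    IntegrableOn (kern t s) (Ioc t s) :=
  intervalIntegral.integrableOn_deriv_of_nonneg (phi_continuous t s).continuousOn
    (fun ρ hρ => phi_hasDerivAt ht hρ) (fun ρ hρ => kern_nonneg ht hρ)

lemma kern_integral {t s : ℝ} (ht : 0 ≤ t) (hts : t < s) :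
    ∫ ρ in Ioo t s, kern t s ρ = π / 2 := by
  have hc : s ^ 2 - t ^ 2 ≠ 0 := by nlinarith
  have hint : IntervalIntegrable (kern t s) volume t s :=
    (intervalIntegrable_iff_integrableOn_Ioc_of_le hts.le).mpr (kern_integrableOn ht hts)
  have heq := intervalIntegral.integral_eq_sub_of_hasDeriv_right_of_le hts.le
    (phi_continuous t s).continuousOn
    (fun ρ hρ => (phi_hasDerivAt ht hρ).hasDerivWithinAt) hint
  rw [intervalIntegral.integral_of_le hts.le, integral_Ioc_eq_integral_Ioo] at heq
  rw [heq]
  unfold phi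
  have e1 : (2 * s ^ 2 - s ^ 2 - t ^ 2) / (s ^ 2 - t ^ 2) = 1 := by
    rw [show 2 * s ^ 2 - s ^ 2 - t ^ 2 = s ^ 2 - t ^ 2 by ring, div_self hc]
  have e2 : (2 * t ^ 2 - s ^ 2 - t ^ 2) / (s ^ 2 - t ^ 2) = -1 := by
    rw [show 2 * t ^ 2 - s ^ 2 - t ^ 2 = -(s ^ 2 - t ^ 2) by ring, neg_div, div_self hc]
  rw [e1, e2, Real.arcsin_one, Real.arcsin_neg_one]
  ring

end AbelAux

open AbelAux MeasureTheory Real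

/-- Solution of the Abelian integral equation
`F(ρ) = ∫_ρ^1 g(t)/sqrt(t² - ρ²) dt`: for every `t ∈ [0,1)`,
`∫_t^1 ρ F(ρ)/sqrt(ρ² - t²) dρ = (π/2) ∫_t^1 g(s) ds`. -/
theorem abel_integral_equation_second_kind (g : ℝ → ℝ)
    (hcont : ContinuousOn g (Icc 0 1)) (F : ℝ → ℝ)
    (hF : ∀ ρ ∈ Ico (0:ℝ) 1, F ρ = ∫ t in ρ..(1:ℝ), g t / Real.sqrt (t ^ 2 - ρ ^ 2)) :
    ∀ t ∈ Ico (0:ℝ) 1,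
      ∫ ρ in t..(1:ℝ), ρ * F ρ / Real.sqrt (ρ ^ 2 - t ^ 2) =
        (Real.pi / 2) * ∫ s in t..(1:ℝ), g s := by
  intro t ht
  obtain ⟨ht0, ht1⟩ := ht
  set g' : ℝ → ℝ := Set.IccExtend (by norm_num : (0:ℝ) ≤ 1) ((Set.Icc (0:ℝ) 1).restrict g)
    with hg'def
  have hg'c : Continuous g' :=
    continuous_IccExtend_iff.mpr (continuousOn_iff_continuous_restrict.mp hcont)
  have hgg' : ∀ x ∈ Icc (0:ℝ) 1, g' x = g x := fun x hx => Set.IccExtend_of_mem _ _ hx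
  set μ : Measure ℝ := volume.restrict (Ioo t 1) with hμdef
  set ν : Measure ℝ := volume.restrict (Ioc t 1) with hνdef
  set f : ℝ → ℝ → ℝ := fun ρ s => if ρ < s then g' s * kern t s ρ else 0 with hfdef
  -- Claim 1 : inner integral over s reproduces the LHS integrand
  have claim1 : ∀ ρ ∈ Ioo t 1,
      ρ * F ρ / Real.sqrt (ρ ^ 2 - t ^ 2) = ∫ s, f ρ s ∂ν := by
    intro ρ hρ
    obtain ⟨hρt, hρ1⟩ := hρ
    have hρ0 : 0 ≤ ρ := ht0.trans hρt.le
    have hFρ := hF ρ ⟨hρ0, hρ1⟩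
    have hind : (fun s => f ρ s) = (Ioi ρ).indicator (fun s => g' s * kern t s ρ) := by
      funext s
      simp [hfdef, Set.indicator_apply, Set.mem_Ioi]
    have hsetEq : Ioi ρ ∩ Ioc t 1 = Ioc ρ 1 := by
      ext x
      simp only [mem_inter_iff, mem_Ioi, mem_Ioc]
      constructor
      · rintro ⟨h1, _, h3⟩; exact ⟨h1, h3⟩
      · rintro ⟨h1, h2⟩; exact ⟨h1, hρt.trans h1, h2⟩
    rw [hνdef, hind, integral_indicator measurableSet_Ioi,
      Measure.restrict_restrict measurableSet_Ioi, hsetEq,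
      ← intervalIntegral.integral_of_le hρ1.le]
    have hcongr : ∫ s in ρ..(1:ℝ), g' s * kern t s ρ
        = ∫ s in ρ..(1:ℝ), g s / Real.sqrt (s ^ 2 - ρ ^ 2) * (ρ / Real.sqrt (ρ ^ 2 - t ^ 2)) := by
      apply intervalIntegral.integral_congr
      intro s hs
      rw [uIcc_of_le hρ1.le] at hs
      obtain ⟨hs1, hs2⟩ := hs
      show g' s * kern t s ρ = g s / Real.sqrt (s ^ 2 - ρ ^ 2) * (ρ / Real.sqrt (ρ ^ 2 - t ^ 2))
      rw [hgg' s ⟨hρ0.trans hs1, hs2⟩, kern]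
      ring
    rw [hcongr, intervalIntegral.integral_mul_const, ← hFρ]
    ring
  -- Claim 2 : inner integral over ρ gives π/2
  have claim2 : ∀ s ∈ Ioc t 1, (∫ ρ, f ρ s ∂μ) = g' s * (π / 2) := by
    intro s hs
    obtain ⟨hst, hs1⟩ := hs
    have hind : (fun ρ => f ρ s) = (Iio s).indicator (fun ρ => g' s * kern t s ρ) := by
      funext ρ
      simp [hfdef, Set.indicator_apply, Set.mem_Iio]
    have hsetEq : Iio s ∩ Ioo t 1 = Ioo t s := by
      ext x
      simp only [mem_inter_iff, mem_Iio, mem_Ioo]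
      constructor
      · rintro ⟨h1, h2, _⟩; exact ⟨h2, h1⟩
      · rintro ⟨h1, h2⟩; exact ⟨h2, h1, h2.trans_le hs1⟩
    rw [hμdef, hind, integral_indicator measurableSet_Iio,
      Measure.restrict_restrict measurableSet_Iio, hsetEq, integral_const_mul,
      kern_integral ht0 hst]
  -- Measurability of the kernel
  have hmeas : AEStronglyMeasurable (Function.uncurry f) (μ.prod ν) := by
    have hk : Measurable fun p : ℝ × ℝ => g' p.2 * kern t p.2 p.1 := by
      apply Measurable.mul
      · exact (hg'c.comp continuous_snd).measurable
      · unfold kern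
        exact measurable_fst.div
          (((Real.continuous_sqrt.comp ((continuous_fst.pow 2).sub continuous_const)).mul
            (Real.continuous_sqrt.comp
              ((continuous_snd.pow 2).sub (continuous_fst.pow 2)))).measurable)
    have : Measurable (Function.uncurry f) := by
      have huf : Function.uncurry f
          = fun p : ℝ × ℝ => if p.1 < p.2 then g' p.2 * kern t p.2 p.1 else 0 := by
        funext p
        simp [hfdef, Function.uncurry]
      rw [huf]
      exact Measurable.ite (measurableSet_lt measurable_fst measurable_snd) hk measurable_const
    exact this.aestronglyMeasurable
  -- Integrability on the product
  have hInt : Integrable (Function.uncurry f) (μ.prod ν) := by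
    rw [integrable_prod_iff' hmeas]
    constructor
    · rw [hνdef]
      filter_upwards [ae_restrict_mem measurableSet_Ioc] with s hs
      obtain ⟨hst, hs1⟩ := hs
      have hind : (fun ρ => Function.uncurry f (ρ, s))
          = (Iio s).indicator (fun ρ => g' s * kern t s ρ) := by
        funext ρ
        simp [hfdef, Function.uncurry, Set.indicator_apply, Set.mem_Iio]
      rw [hind, integrable_indicator_iff measurableSet_Iio, IntegrableOn, hμdef,
        Measure.restrict_restrict measurableSet_Iio]
      have hsetEq : Iio s ∩ Ioo t 1 = Ioo t s := by
        ext x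
        simp only [mem_inter_iff, mem_Iio, mem_Ioo]
        constructor
        · rintro ⟨h1, h2, _⟩; exact ⟨h2, h1⟩
        · rintro ⟨h1, h2⟩; exact ⟨h2, h1, h2.trans_le hs1⟩
      rw [hsetEq]
      exact ((kern_integrableOn ht0 hst).mono_set Ioo_subset_Ioc_self).const_mul _
    · have hbound : Continuous fun s : ℝ => |g' s| * (π / 2) :=
        hg'c.abs.mul continuous_const
      apply (hbound.integrableOn_Ioc (a := t) (b := 1)).congr
      filter_upwards [ae_restrict_mem measurableSet_Ioc] with s hs
      obtain ⟨hst, hs1⟩ := hs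
      symm
      have hind : (fun ρ => ‖Function.uncurry f (ρ, s)‖)
          = (Iio s).indicator (fun ρ => ‖g' s * kern t s ρ‖) := by
        funext ρ
        by_cases h : ρ < s <;>
          simp [hfdef, Function.uncurry, Set.indicator_apply, Set.mem_Iio, h]
      rw [hind, integral_indicator measurableSet_Iio, hμdef,
        Measure.restrict_restrict measurableSet_Iio]
      have hsetEq : Iio s ∩ Ioo t 1 = Ioo t s := by
        ext x
        simp only [mem_inter_iff, mem_Iio, mem_Ioo]
        constructor
        · rintro ⟨h1, h2, _⟩; exact ⟨h2, h1⟩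
        · rintro ⟨h1, h2⟩; exact ⟨h2, h1, h2.trans_le hs1⟩
      rw [hsetEq]
      have : ∫ ρ in Ioo t s, ‖g' s * kern t s ρ‖
          = ∫ ρ in Ioo t s, |g' s| * kern t s ρ := by
        apply setIntegral_congr_fun measurableSet_Ioo
        intro ρ hρ
        show ‖g' s * kern t s ρ‖ = |g' s| * kern t s ρ
        rw [Real.norm_eq_abs, abs_mul, abs_of_nonneg (kern_nonneg ht0 hρ)]
      rw [this, integral_const_mul, kern_integral ht0 hst]
  -- Put everything together
  calc ∫ ρ in t..(1:ℝ), ρ * F ρ / Real.sqrt (ρ ^ 2 - t ^ 2)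
      = ∫ ρ in Ioc t 1, ρ * F ρ / Real.sqrt (ρ ^ 2 - t ^ 2) :=
        intervalIntegral.integral_of_le ht1.le
    _ = ∫ ρ in Ioo t 1, ρ * F ρ / Real.sqrt (ρ ^ 2 - t ^ 2) :=
        integral_Ioc_eq_integral_Ioo
    _ = ∫ ρ, (∫ s, f ρ s ∂ν) ∂μ := by
        rw [hμdef]
        exact setIntegral_congr_fun measurableSet_Ioo claim1
    _ = ∫ s, (∫ ρ, f ρ s ∂μ) ∂ν := integral_integral_swap hInt
    _ = ∫ s in Ioc t 1, g' s * (π / 2) := by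
        rw [hνdef]
        exact setIntegral_congr_fun measurableSet_Ioc claim2
    _ = (π / 2) * ∫ s in Ioc t 1, g' s := by
        rw [integral_mul_const]
        ring
    _ = (π / 2) * ∫ s in t..(1:ℝ), g s := by
        congr 1
        rw [← intervalIntegral.integral_of_le ht1.le]
        apply intervalIntegral.integral_congr
        intro s hs
        rw [uIcc_of_le ht1.le] at hs
        exact hgg' s ⟨ht0.trans hs.1, hs.2⟩
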